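/- Let n ≥ 2. For every (x₁,…,xₙ) ∈ [0,1]ⁿ, the point (x₁,…,xₙ, min{x₁,…,xₙ}) belongs to the convex hull in ℝ^{n+1} of the 2ⁿ points v(ε) = (ε₁,…,εₙ, ∏ᵢ εᵢ) with ε ∈ {0,1}ⁿ. (Sharpness of the upper Fréchet–Hoeffding bound for the conjunction of n conditional events.) -/

import Mathlib

open MeasureTheory Set

/-- Sharpness of the upper Fréchet–Hoeffding bound: for every
    `(x₁,…,xₙ) ∈ [0,1]ⁿ` the point `(x₁,…,xₙ, T_M(x₁,…,xₙ))` belongs to the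
    convex hull of the 2ⁿ points `v(ε) = (ε₁,…,εₙ, ∏ᵢ εᵢ)`, `ε ∈ {0,1}ⁿ`. -/
theorem upper_frechet_bound_sharp (n : ℕ) (hn : 2 ≤ n)
    (x : Fin n → ℝ) (hx : ∀ i, x i ∈ Set.Icc (0 : ℝ) 1) :
    (x, ⨅ i, x i) ∈
      convexHull ℝ {q : (Fin n → ℝ) × ℝ | ∃ ε : Fin n → Bool,
        q = (fun i => if ε i then 1 else 0, ∏ i, if ε i then (1 : ℝ) else 0)} := by
  have hne : Nonempty (Fin n) := ⟨⟨0, by omega⟩⟩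
  set S : Set ((Fin n → ℝ) × ℝ) := {q : (Fin n → ℝ) × ℝ | ∃ ε : Fin n → Bool,
        q = (fun i => if ε i then 1 else 0, ∏ i, if ε i then (1 : ℝ) else 0)} with hS
  have hSfin : S.Finite := by
    have : S = Set.range (fun ε : Fin n → Bool =>
        ((fun i => if ε i then (1:ℝ) else 0, ∏ i, if ε i then (1 : ℝ) else 0) :
          (Fin n → ℝ) × ℝ)) := by
      ext q
      exact ⟨fun ⟨ε, h⟩ => ⟨ε, h.symm⟩, fun ⟨ε, h⟩ => ⟨ε, h.symm⟩⟩
    rw [this]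
    exact Set.finite_range _
  -- the measure
  set μ : Measure ℝ := volume.restrict (Set.Ioc (0:ℝ) 1) with hμ
  have : IsProbabilityMeasure μ := ⟨by simp [hμ]⟩
  -- the function
  set f : ℝ → (Fin n → ℝ) × ℝ := fun s =>
    ((fun i => if s < x i then (1:ℝ) else 0), if s < ⨅ i, x i then (1:ℝ) else 0) with hf
  have hmeas : Measurable f := by
    apply Measurable.prod
    · exact measurable_pi_lambda _ (fun i =>
        Measurable.ite (measurableSet_lt measurable_id measurable_const)
          measurable_const measurable_const)
    · exact Measurable.ite (measurableSet_lt measurable_id measurable_const)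
        measurable_const measurable_const
  have hint : Integrable f μ := by
    refine Integrable.mono' (integrable_const 1) hmeas.aestronglyMeasurable ?_
    refine Filter.Eventually.of_forall fun s => ?_
    rw [Prod.norm_def]
    apply max_le
    · rw [pi_norm_le_iff_of_nonneg zero_le_one]
      intro i; simp only [hf]; split_ifs <;> simp
    · simp only [hf]; split_ifs <;> simp
  have hmem : ∀ s, f s ∈ S := by
    intro s
    refine ⟨fun i => decide (s < x i), ?_⟩
    have hprod : (∏ i, if s < x i then (1:ℝ) else 0) =
        if s < ⨅ i, x i then (1:ℝ) else 0 := by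
      by_cases h : s < ⨅ i, x i
      · have : ∀ i, s < x i := fun i =>
          lt_of_lt_of_le h (ciInf_le (Set.Finite.bddBelow (Set.finite_range x)) i)
        simp [h, this]
      · push_neg at h
        obtain ⟨i, hi⟩ := Finite.exists_min x
        have hxi : ¬ s < x i := not_lt.mpr (le_trans (le_ciInf hi) h)
        rw [if_neg (not_lt.mpr h)]
        exact Finset.prod_eq_zero (Finset.mem_univ i) (by simp [hxi])
    simp only [hf, decide_eq_true_eq]
    rw [hprod]
  -- inf bounds
  have hinf0 : 0 ≤ ⨅ i, x i := le_ciInf fun i => (hx i).1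
  have hinf1 : ⨅ i, x i ≤ 1 := le_trans
    (ciInf_le (Set.Finite.bddBelow (Set.finite_range x)) (Classical.arbitrary _)) (hx _).2
  -- integral of indicator-like function
  have key : ∀ c : ℝ, 0 ≤ c → c ≤ 1 → ∫ s, (if s < c then (1:ℝ) else 0) ∂μ = c := by
    intro c hc0 hc1
    have h1 : (fun s => if s < c then (1:ℝ) else 0) = (Set.Iio c).indicator (fun _ => (1:ℝ)) := by
      ext s; simp [Set.indicator, Set.mem_Iio]
    rw [hμ, h1, integral_indicator measurableSet_Iio]
    rw [Measure.restrict_restrict measurableSet_Iio]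
    have h2 : Set.Iio c ∩ Set.Ioc 0 1 = Set.Ioo 0 c := by
      ext s
      simp only [Set.mem_inter_iff, Set.mem_Iio, Set.mem_Ioc, Set.mem_Ioo]
      constructor
      · rintro ⟨h, h0, _⟩; exact ⟨h0, h⟩
      · rintro ⟨h0, h⟩; exact ⟨h, h0, le_trans h.le hc1⟩
    rw [h2]
    simp [Real.volume_Ioo, ENNReal.toReal_ofReal hc0, hc0]
  -- the point is the integral of f
  have hintegral : (∫ s, f s ∂μ) = (x, ⨅ i, x i) := by
    have h2 : (∫ s, f s ∂μ).2 = ⨅ i, x i := by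
      have := ContinuousLinearMap.integral_comp_comm
        (ContinuousLinearMap.snd ℝ (Fin n → ℝ) ℝ) hint
      simp only [ContinuousLinearMap.coe_snd'] at this
      rw [← this]
      exact key _ hinf0 hinf1
    have h1 : (∫ s, f s ∂μ).1 = x := by
      funext i
      have hL := ContinuousLinearMap.integral_comp_comm
        (((ContinuousLinearMap.proj i : (Fin n → ℝ) →L[ℝ] ℝ)).comp
          (ContinuousLinearMap.fst ℝ (Fin n → ℝ) ℝ)) hint
      simp only [ContinuousLinearMap.coe_comp', Function.comp, ContinuousLinearMap.coe_fst',
        ContinuousLinearMap.proj_apply] at hL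
      rw [← hL]
      exact key _ (hx i).1 (hx i).2
    exact Prod.ext h1 h2
  rw [← hintegral]
  exact (convex_convexHull ℝ S).integral_mem ((hSfin.isCompact_convexHull (𝕜 := ℝ)).isClosed)
    (Filter.Eventually.of_forall fun s => subset_convexHull ℝ S (hmem s)) hint
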